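/- Consider the Ising model, i.e. I_x = I for all x ∈ ℤ with a fixed real I, let β > 0, τ = e^{−β I} and χ = τ^2 = e^{−2β I}. Then for all integers n ≥ 1 and 0 ≤ r ≤ n, the mixed-boundary crystal partition function is expressed through the minus-boundary ones by Y^r_n = χ^{−1/2}·( X^{r+1}_{n+1} − X^{r+1}_n ), with the convention X^s_{n'} = 0 whenever s > n'. -/

import Mathlib

open Finset

/-- Spin configurations on `{1, …, n}`, encoded as boolean functions
(`true` ↔ spin `+1`, `false` ↔ spin `-1`). -/
abbrev Config (n : ℕ) := {x // x ∈ Finset.Icc 1 n} → Bool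

/-- The spin value `±1` of the configuration `σ` at the site `x` (value `1` off the box). -/
noncomputable def spin {n : ℕ} (σ : Config n) (x : ℕ) : ℝ :=
  if h : x ∈ Finset.Icc 1 n then (if σ ⟨x, h⟩ then 1 else -1) else 1

/-- The number `N_+(σ)` of sites where `σ` takes the value `+1`. -/
def Nplus {n : ℕ} (σ : Config n) : ℕ :=
  (Finset.univ.filter fun x => σ x = true).card

/-- The Ising Hamiltonian `H^-` on `{1, …, n}` with minus boundary spin on
both sides. -/
noncomputable def Hminus (I : ℝ) (n : ℕ) (σ : Config n) : ℝ :=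
  I * ((∑ x ∈ Finset.Icc 2 n, (if spin σ (x - 1) ≠ spin σ x then 1 else 0))
        + (if spin σ 1 ≠ -1 then 1 else 0)
        + (if spin σ n ≠ -1 then 1 else 0))

/-- The crystal partition function `X^r_n` of the Ising model (minus boundary
on both sides), defined for every integer `r`; it vanishes automatically when
`r < 0` or `r > n`. -/
noncomputable def X (β I : ℝ) (n : ℕ) (r : ℤ) : ℝ :=
  ∑ σ ∈ Finset.univ.filter (fun σ : Config n => (Nplus σ : ℤ) = r),
    Real.exp (-β * Hminus I n σ)

/-- The Ising Hamiltonian `H^∓` on `{1, …, n}`: minus boundary spin on the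
left, plus boundary spin on the right. -/
noncomputable def Hmp (I : ℝ) (n : ℕ) (σ : Config n) : ℝ :=
  I * ((∑ x ∈ Finset.Icc 2 n, (if spin σ (x - 1) ≠ spin σ x then 1 else 0))
        + (if spin σ 1 ≠ -1 then 1 else 0)
        + (if spin σ n ≠ 1 then 1 else 0))

/-- The crystal partition function `Y^r_n` of the Ising model (minus boundary
on the left, plus on the right). -/
noncomputable def Y (β I : ℝ) (n : ℕ) (r : ℤ) : ℝ :=
  ∑ σ ∈ Finset.univ.filter (fun σ : Config n => (Nplus σ : ℤ) = r),
    Real.exp (-β * Hmp I n σ)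

/-- Extend a configuration on `{1,…,n}` to one on `{1,…,n+1}` with last spin `b`. -/
def extCfg (n : ℕ) (τ : Config n) (b : Bool) : Config (n + 1) :=
  fun x => if h : x.1 ≤ n then
    τ ⟨x.1, by
      have hx := x.2
      simp only [Finset.mem_Icc] at hx ⊢
      exact ⟨hx.1, h⟩⟩
  else b

lemma spin_ext_of_le (n : ℕ) (τ : Config n) (b : Bool) {x : ℕ} (hx : x ≤ n) :
    spin (extCfg n τ b) x = spin τ x := by
  have hiff : x ∈ Finset.Icc 1 (n + 1) ↔ x ∈ Finset.Icc 1 n := by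
    simp only [Finset.mem_Icc]
    exact ⟨fun h => ⟨h.1, hx⟩, fun h => ⟨h.1, h.2.trans (Nat.le_succ n)⟩⟩
  unfold spin
  by_cases h : x ∈ Finset.Icc 1 n
  · rw [dif_pos (hiff.mpr h), dif_pos h]
    show (if extCfg n τ b ⟨x, _⟩ then (1:ℝ) else -1) = _
    unfold extCfg
    rw [dif_pos hx]
  · rw [dif_neg (fun hh => h (hiff.mp hh)), dif_neg h]

lemma spin_ext_top (n : ℕ) (τ : Config n) (b : Bool) :
    spin (extCfg n τ b) (n + 1) = if b then (1:ℝ) else -1 := by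
  have hmem : n + 1 ∈ Finset.Icc 1 (n + 1) := by simp
  unfold spin
  rw [dif_pos hmem]
  show (if extCfg n τ b ⟨n + 1, _⟩ then (1:ℝ) else -1) = _
  unfold extCfg
  rw [dif_neg (by exact Nat.not_succ_le_self n)]

lemma Nplus_eq_sum {k : ℕ} (σ : Config k) :
    (Nplus σ : ℤ) = ∑ x ∈ Finset.Icc 1 k, (if spin σ x = 1 then (1:ℤ) else 0) := by
  classical
  unfold Nplus
  rw [Finset.card_filter]
  push_cast
  rw [Finset.univ_eq_attach,
    ← Finset.sum_attach (Finset.Icc 1 k) (fun x => if spin σ x = 1 then (1:ℤ) else 0)]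
  refine Finset.sum_congr rfl fun x _ => ?_
  have : spin σ x.1 = if σ x then (1:ℝ) else -1 := by
    unfold spin
    rw [dif_pos x.2]
  rw [this]
  cases hσ : σ x <;> simp [hσ] <;> norm_num

lemma Nplus_ext (n : ℕ) (τ : Config n) (b : Bool) :
    (Nplus (extCfg n τ b) : ℤ) = (Nplus τ : ℤ) + (if b then 1 else 0) := by
  rw [Nplus_eq_sum, Nplus_eq_sum,
    Finset.sum_Icc_succ_top (by omega : 1 ≤ n + 1)]
  congr 1
  · refine Finset.sum_congr rfl fun x hx => ?_
    rw [spin_ext_of_le n τ b (Finset.mem_Icc.mp hx).2]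
  · rw [spin_ext_top]
    cases b <;> norm_num

lemma Hminus_ext_false (I : ℝ) (n : ℕ) (hn : 1 ≤ n) (τ : Config n) :
    Hminus I (n + 1) (extCfg n τ false) = Hminus I n τ := by
  unfold Hminus
  rw [Finset.sum_Icc_succ_top (by omega : 2 ≤ n + 1)]
  have hsum : ∀ x ∈ Finset.Icc 2 n,
      (if spin (extCfg n τ false) (x - 1) ≠ spin (extCfg n τ false) x then (1:ℝ) else 0)
        = (if spin τ (x - 1) ≠ spin τ x then (1:ℝ) else 0) := by
    intro x hx
    rw [Finset.mem_Icc] at hx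
    rw [spin_ext_of_le n τ false (by omega), spin_ext_of_le n τ false hx.2]
  rw [Finset.sum_congr rfl hsum]
  have h1 : spin (extCfg n τ false) 1 = spin τ 1 := spin_ext_of_le n τ false hn
  have htop : spin (extCfg n τ false) (n + 1) = -1 := by rw [spin_ext_top]; simp
  have hn' : spin (extCfg n τ false) (n + 1 - 1) = spin τ n := by
    simp only [Nat.add_sub_cancel]
    exact spin_ext_of_le n τ false le_rfl
  rw [h1, htop, hn']
  simp only [ne_eq, not_true_eq_false, if_false]
  ring

lemma Hminus_ext_true (I : ℝ) (n : ℕ) (hn : 1 ≤ n) (τ : Config n) :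
    Hminus I (n + 1) (extCfg n τ true) = Hmp I n τ + I := by
  unfold Hminus Hmp
  rw [Finset.sum_Icc_succ_top (by omega : 2 ≤ n + 1)]
  have hsum : ∀ x ∈ Finset.Icc 2 n,
      (if spin (extCfg n τ true) (x - 1) ≠ spin (extCfg n τ true) x then (1:ℝ) else 0)
        = (if spin τ (x - 1) ≠ spin τ x then (1:ℝ) else 0) := by
    intro x hx
    rw [Finset.mem_Icc] at hx
    rw [spin_ext_of_le n τ true (by omega), spin_ext_of_le n τ true hx.2]
  rw [Finset.sum_congr rfl hsum]
  have h1 : spin (extCfg n τ true) 1 = spin τ 1 := spin_ext_of_le n τ true hn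
  have htop : spin (extCfg n τ true) (n + 1) = 1 := by rw [spin_ext_top]; simp
  have hn' : spin (extCfg n τ true) (n + 1 - 1) = spin τ n := by
    simp only [Nat.add_sub_cancel]
    exact spin_ext_of_le n τ true le_rfl
  rw [h1, htop, hn']
  have : ((1:ℝ) ≠ -1) := by norm_num
  simp only [ne_eq, this, not_false_eq_true, if_true]
  ring

/-- The splitting equivalence `Config n × Bool ≃ Config (n+1)`. -/
def cfgEquiv (n : ℕ) : Config n × Bool ≃ Config (n + 1) where
  toFun p := extCfg n p.1 p.2
  invFun σ :=
    (fun x => σ ⟨x.1, by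
        have hx := x.2
        simp only [Finset.mem_Icc] at hx ⊢
        exact ⟨hx.1, hx.2.trans (Nat.le_succ n)⟩⟩,
     σ ⟨n + 1, by simp⟩)
  left_inv p := by
    obtain ⟨τ, b⟩ := p
    refine Prod.ext ?_ ?_
    · funext x
      show extCfg n τ b ⟨x.1, _⟩ = τ x
      unfold extCfg
      have hx := x.2
      simp only [Finset.mem_Icc] at hx
      rw [dif_pos hx.2]
    · show extCfg n τ b ⟨n + 1, _⟩ = b
      unfold extCfg
      rw [dif_neg (by exact Nat.not_succ_le_self n)]
  right_inv σ := by
    funext x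
    show extCfg n _ _ x = σ x
    unfold extCfg
    have hx := x.2
    simp only [Finset.mem_Icc] at hx
    by_cases h : x.1 ≤ n
    · rw [dif_pos h]
    · rw [dif_neg h]
      have : x = ⟨n + 1, by simp⟩ := Subtype.ext (by show x.1 = n + 1; omega)
      rw [this]

lemma X_succ (β I : ℝ) (n : ℕ) (hn : 1 ≤ n) (r : ℕ) :
    X β I (n + 1) ((r : ℤ) + 1)
      = Real.exp (-β * I) * Y β I n (r : ℤ) + X β I n ((r : ℤ) + 1) := by
  classical
  unfold X Y
  rw [Finset.sum_filter, ← Equiv.sum_comp (cfgEquiv n)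
    (fun σ => if (Nplus σ : ℤ) = (r : ℤ) + 1 then Real.exp (-β * Hminus I (n + 1) σ) else 0),
    Fintype.sum_prod_type]
  have hsplit : ∀ τ : Config n,
      (∑ b : Bool, if (Nplus (cfgEquiv n (τ, b)) : ℤ) = (r : ℤ) + 1 then
          Real.exp (-β * Hminus I (n + 1) (cfgEquiv n (τ, b))) else 0)
        = (if (Nplus τ : ℤ) = (r : ℤ) then
            Real.exp (-β * I) * Real.exp (-β * Hmp I n τ) else 0)
          + (if (Nplus τ : ℤ) = (r : ℤ) + 1 then Real.exp (-β * Hminus I n τ) else 0) := by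
    intro τ
    rw [Fintype.sum_bool]
    congr 1
    · show (if (Nplus (extCfg n τ true) : ℤ) = (r : ℤ) + 1 then
          Real.exp (-β * Hminus I (n + 1) (extCfg n τ true)) else 0) = _
      rw [Nplus_ext, Hminus_ext_true I n hn τ]
      have hcond : ((Nplus τ : ℤ) + (if true then 1 else 0) = (r : ℤ) + 1)
          ↔ ((Nplus τ : ℤ) = (r : ℤ)) := by simp
      by_cases h : (Nplus τ : ℤ) = (r : ℤ)
      · rw [if_pos (hcond.mpr h), if_pos h, ← Real.exp_add]
        ring_nf
      · rw [if_neg (fun hh => h (hcond.mp hh)), if_neg h]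
    · show (if (Nplus (extCfg n τ false) : ℤ) = (r : ℤ) + 1 then
          Real.exp (-β * Hminus I (n + 1) (extCfg n τ false)) else 0) = _
      rw [Nplus_ext, Hminus_ext_false I n hn τ]
      simp
  rw [Finset.sum_congr rfl (fun τ _ => hsplit τ), Finset.sum_add_distrib,
    ← Finset.sum_filter, ← Finset.sum_filter, Finset.mul_sum]

/-- The mixed-boundary crystal partition function of the Ising model is
expressed through the minus-boundary ones:
`Y^r_n = χ^{-1/2} (X^{r+1}_{n+1} - X^{r+1}_n)` with `χ = e^{-2βI}`
(here `X^s_{n'} = 0` automatically whenever `s > n'`). -/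
theorem stmt_12 (β I : ℝ) (hβ : 0 < β) (n : ℕ) (hn : 1 ≤ n)
    (r : ℕ) (hr : r ≤ n) :
    Y β I n (r : ℤ) = Real.exp (-2 * β * I) ^ (-(1 / 2) : ℝ)
        * (X β I (n + 1) ((r : ℤ) + 1) - X β I n ((r : ℤ) + 1)) := by
  have hpow : Real.exp (-2 * β * I) ^ (-(1 / 2) : ℝ) = Real.exp (β * I) := by
    rw [← Real.exp_mul]
    ring_nf
  rw [hpow, X_succ β I n hn r]
  rw [add_sub_cancel_right, ← mul_assoc, ← Real.exp_add]
  ring_nf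
  rw [Real.exp_zero, one_mul]
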